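/- Let (μ_t)_{t∈ℝ} be a Hopf deformation of a cocommutative Hopf algebra B with deformed antipodes S_t. Then S_t∘S_{−t} = id for all t ∈ ℝ. -/

import Mathlib

open TensorProduct Coalgebra

variable {B : Type} [Ring B] [HopfAlgebra ℂ B]

/-- The comultiplication `Λ = (id ⊗ τ ⊗ id) ∘ (Δ ⊗ Δ)` of `B ⊗ B`. -/
noncomputable def Lam : B ⊗[ℂ] B →ₗ[ℂ] (B ⊗[ℂ] B) ⊗[ℂ] (B ⊗[ℂ] B) :=
  (TensorProduct.tensorTensorTensorComm ℂ B B B B).toLinearMap ∘ₗ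
    TensorProduct.map (comul (R := ℂ)) (comul (R := ℂ))

/-- The map `b ↦ δ(b)·1 : B → B`. -/
noncomputable def unitCounit : B →ₗ[ℂ] B :=
  Algebra.linearMap ℂ B ∘ₗ counit (R := ℂ)

namespace Stmt12

variable {A : Type} [AddCommGroup A] [Module ℂ A] [Coalgebra ℂ A]

/-- Convolution of two maps `A → B` with respect to a product `m` on `B`. -/
noncomputable def cnv (m : B ⊗[ℂ] B →ₗ[ℂ] B) (f g : A →ₗ[ℂ] B) : A →ₗ[ℂ] B :=
  m ∘ₗ TensorProduct.map f g ∘ₗ comul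

/-- The convolution unit `a ↦ ε(a)·1`. -/
noncomputable def ecu : A →ₗ[ℂ] B := Algebra.linearMap ℂ B ∘ₗ counit

theorem cnv_apply (m : B ⊗[ℂ] B →ₗ[ℂ] B) (f g : A →ₗ[ℂ] B) (a : A) :
    cnv m f g a = m (TensorProduct.map f g (comul a)) := rfl

theorem ecu_apply (a : A) : (ecu : A →ₗ[ℂ] B) a = counit (R := ℂ) a • 1 := by
  simp [ecu, Algebra.algebraMap_eq_smul_one]

theorem sum_counit_smul {a : A} (r : Coalgebra.Repr ℂ a (A × A)) :
    ∑ i ∈ r.index, counit (R := ℂ) (r.right i) • r.left i = a := by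
  have h := congrArg (TensorProduct.rid ℂ A) (sum_tmul_counit_eq r)
  simp only [map_sum, TensorProduct.rid_tmul, one_smul] at h
  exact h

theorem sum_counit_smul' {a : A} (r : Coalgebra.Repr ℂ a (A × A)) :
    ∑ i ∈ r.index, counit (R := ℂ) (r.left i) • r.right i = a := by
  have h := congrArg (TensorProduct.lid ℂ A) (sum_counit_tmul_eq r)
  simp only [map_sum, TensorProduct.lid_tmul, one_smul] at h
  exact h

theorem cnv_ecu_right (m : B ⊗[ℂ] B →ₗ[ℂ] B)
    (h1 : ∀ a : B, m (a ⊗ₜ[ℂ] (1 : B)) = a) (f : A →ₗ[ℂ] B) :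
    cnv m f ecu = f := by
  ext a
  have r := ℛ ℂ a
  rw [cnv_apply, ← r.eq]
  simp only [map_sum, TensorProduct.map_tmul, ecu_apply]
  calc ∑ i ∈ r.index, m (f (r.left i) ⊗ₜ[ℂ] (counit (R := ℂ) (r.right i) • (1:B)))
      = ∑ i ∈ r.index, counit (R := ℂ) (r.right i) • f (r.left i) := by
        refine Finset.sum_congr rfl fun i _ => ?_
        rw [TensorProduct.tmul_smul, map_smul, h1]
    _ = f a := by
        simp_rw [← map_smul f, ← map_sum]
        rw [sum_counit_smul]

theorem cnv_ecu_left (m : B ⊗[ℂ] B →ₗ[ℂ] B)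
    (h1 : ∀ a : B, m ((1 : B) ⊗ₜ[ℂ] a) = a) (f : A →ₗ[ℂ] B) :
    cnv m ecu f = f := by
  ext a
  have r := ℛ ℂ a
  rw [cnv_apply, ← r.eq]
  simp only [map_sum, TensorProduct.map_tmul, ecu_apply]
  calc ∑ i ∈ r.index, m ((counit (R := ℂ) (r.left i) • (1:B)) ⊗ₜ[ℂ] f (r.right i))
      = ∑ i ∈ r.index, counit (R := ℂ) (r.left i) • f (r.right i) := by
        refine Finset.sum_congr rfl fun i _ => ?_
        rw [← TensorProduct.smul_tmul', map_smul, h1]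
    _ = f a := by
        simp_rw [← map_smul f, ← map_sum]
        rw [sum_counit_smul']

theorem cnv_assoc (m : B ⊗[ℂ] B →ₗ[ℂ] B)
    (hm : ∀ a b c : B, m (m (a ⊗ₜ[ℂ] b) ⊗ₜ[ℂ] c) = m (a ⊗ₜ[ℂ] m (b ⊗ₜ[ℂ] c)))
    (f g h : A →ₗ[ℂ] B) : cnv m (cnv m f g) h = cnv m f (cnv m g h) := by
  ext a
  have r := ℛ ℂ a
  have a₁ : (i : r.ι) → Coalgebra.Repr ℂ (r.left i) (A × A) := fun i => ℛ ℂ (r.left i)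
  have a₂ : (i : r.ι) → Coalgebra.Repr ℂ (r.right i) (A × A) := fun i => ℛ ℂ (r.right i)
  have key := congrArg (m ∘ₗ TensorProduct.map f (m ∘ₗ TensorProduct.map g h))
    (sum_tmul_tmul_eq r a₁ a₂)
  simp only [map_sum, LinearMap.comp_apply, TensorProduct.map_tmul] at key
  rw [cnv_apply, cnv_apply, ← r.eq]
  simp only [map_sum, TensorProduct.map_tmul]
  calc ∑ i ∈ r.index, m ((cnv m f g) (r.left i) ⊗ₜ[ℂ] h (r.right i))
      = ∑ i ∈ r.index, ∑ j ∈ (a₁ i).index,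
          m (f ((a₁ i).left j) ⊗ₜ[ℂ] m (g ((a₁ i).right j) ⊗ₜ[ℂ] h (r.right i))) := by
        refine Finset.sum_congr rfl fun i _ => ?_
        rw [cnv_apply, ← (a₁ i).eq]
        simp only [map_sum, TensorProduct.map_tmul, TensorProduct.sum_tmul]
        exact Finset.sum_congr rfl fun j _ => hm _ _ _
    _ = ∑ i ∈ r.index, ∑ j ∈ (a₂ i).index,
          m (f (r.left i) ⊗ₜ[ℂ] m (g ((a₂ i).left j) ⊗ₜ[ℂ] h ((a₂ i).right j))) := key
    _ = ∑ i ∈ r.index, m (f (r.left i) ⊗ₜ[ℂ] (cnv m g h) (r.right i)) := by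
        refine Finset.sum_congr rfl fun i _ => ?_
        rw [cnv_apply, ← (a₂ i).eq]
        simp only [map_sum, TensorProduct.map_tmul, TensorProduct.tmul_sum]

end Stmt12
/-- Let `(μ_t)_{t∈ℝ}` be a Hopf deformation of the Hopf algebra `B` with deformed
antipodes `S_t`, i.e. `μ_t ∘ (S_t ⊗ id) ∘ Δ = μ_t ∘ (id ⊗ S_t) ∘ Δ = δ(·)1`.  Then
if `B` is
cocommutative (`Δ = τ ∘ Δ`), then `S_t ∘ S_{−t} = id` for all `t ∈ ℝ`. -/
theorem stmt12
    (hcocomm : (TensorProduct.comm ℂ B B).toLinearMap ∘ₗ comul (R := ℂ) = comul (R := ℂ) (A := B))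
    (μt : ℝ → (B ⊗[ℂ] B →ₗ[ℂ] B))
    (hzero : μt 0 = LinearMap.mul' ℂ B)
    (hassoc : ∀ (t : ℝ) (a b c : B),
      μt t (μt t (a ⊗ₜ[ℂ] b) ⊗ₜ[ℂ] c) = μt t (a ⊗ₜ[ℂ] μt t (b ⊗ₜ[ℂ] c)))
    (hone : ∀ (t : ℝ) (a : B), μt t ((1 : B) ⊗ₜ[ℂ] a) = a ∧ μt t (a ⊗ₜ[ℂ] (1 : B)) = a)
    (hcompat : ∀ t s : ℝ,
      comul (R := ℂ) ∘ₗ μt (t + s) = TensorProduct.map (μt t) (μt s) ∘ₗ Lam)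
    (hcont : ∀ x : B ⊗[ℂ] B, Continuous fun t : ℝ => counit (R := ℂ) (μt t x))
    (S : ℝ → (B →ₗ[ℂ] B))
    (hS : ∀ t : ℝ,
      μt t ∘ₗ TensorProduct.map (S t) LinearMap.id ∘ₗ comul (R := ℂ) = unitCounit ∧
      μt t ∘ₗ TensorProduct.map LinearMap.id (S t) ∘ₗ comul (R := ℂ) = unitCounit) :
    ∀ t : ℝ, S t ∘ₗ S (-t) = LinearMap.id := by
  intro t
  have hecuB : (unitCounit : B →ₗ[ℂ] B) = Stmt12.ecu := rfl
  -- `S r 1 = 1` and `S r ∘ (δ(·)1) = δ(·)1`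
  have hS1 : ∀ r : ℝ, S r (1 : B) = 1 := by
    intro r
    have h := LinearMap.congr_fun (hS r).1 (1 : B)
    simp only [LinearMap.comp_apply, Bialgebra.comul_one, Algebra.TensorProduct.one_def,
      TensorProduct.map_tmul, LinearMap.id_coe, id_eq] at h
    rw [(hone r (S r (1 : B))).2] at h
    rw [h, unitCounit]
    simp [Algebra.algebraMap_eq_smul_one]
  have hSe : ∀ r : ℝ, ∀ b : B, S r (unitCounit b) = unitCounit b := by
    intro r b
    simp [unitCounit, Algebra.algebraMap_eq_smul_one, map_smul, hS1 r]
  -- counit of the deformation at `t = 0`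
  have he2 : ∀ z : B ⊗[ℂ] B, unitCounit (μt 0 z) = (Stmt12.ecu : B ⊗[ℂ] B →ₗ[ℂ] B) z := by
    have : unitCounit ∘ₗ μt 0 = (Stmt12.ecu : B ⊗[ℂ] B →ₗ[ℂ] B) := by
      rw [hzero]
      apply TensorProduct.ext'
      intro x y
      simp only [LinearMap.comp_apply, LinearMap.mul'_apply, unitCounit, Stmt12.ecu]
      rw [show counit (R := ℂ) (x ⊗ₜ[ℂ] y) = counit (R := ℂ) x * counit (R := ℂ) y from by simp [mul_comm]]
      rw [Bialgebra.counit_mul]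
    intro z
    exact LinearMap.congr_fun this z
  -- compatibility, pointwise, at `a + b = 0`
  have hcompat' : ∀ (a b : ℝ) (z : B ⊗[ℂ] B), a + b = 0 →
      TensorProduct.map (μt a) (μt b) (comul (R := ℂ) z) = comul (R := ℂ) (μt 0 z) := by
    intro a b z hab
    have h := LinearMap.congr_fun (hcompat a b) z
    rw [hab] at h
    simp only [LinearMap.comp_apply] at h
    rw [h]
    rfl
  -- `μ_t ⋆ (S_t ∘ μ_{-t}) = e` in the convolution monoid on `L(B ⊗ B, B)`
  have hFG : Stmt12.cnv (μt t) (μt t) (S t ∘ₗ μt (-t)) = Stmt12.ecu := by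
    apply LinearMap.ext
    intro z
    rw [Stmt12.cnv_apply]
    have hm : TensorProduct.map (μt t) (S t ∘ₗ μt (-t)) (comul (R := ℂ) z)
        = TensorProduct.map LinearMap.id (S t)
            (TensorProduct.map (μt t) (μt (-t)) (comul (R := ℂ) z)) := by
      have h := LinearMap.congr_fun
        (TensorProduct.map_comp LinearMap.id (S t) (μt t) (μt (-t))) (comul (R := ℂ) z)
      simpa using h
    rw [hm, hcompat' t (-t) z (by ring)]
    have h := LinearMap.congr_fun (hS t).2 (μt 0 z)
    simp only [LinearMap.comp_apply] at h
    rw [h]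
    exact he2 z
  -- `(S_t ∘ μ_{-t}) ⋆ μ_t = e`
  have hGF : Stmt12.cnv (μt t) (S t ∘ₗ μt (-t)) (μt t) = Stmt12.ecu := by
    apply LinearMap.ext
    intro z
    rw [Stmt12.cnv_apply]
    have hm : TensorProduct.map (S t ∘ₗ μt (-t)) (μt t) (comul (R := ℂ) z)
        = TensorProduct.map (S t) LinearMap.id
            (TensorProduct.map (μt (-t)) (μt t) (comul (R := ℂ) z)) := by
      have h := LinearMap.congr_fun
        (TensorProduct.map_comp (S t) LinearMap.id (μt (-t)) (μt t)) (comul (R := ℂ) z)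
      simpa using h
    rw [hm, hcompat' (-t) t z (by ring)]
    have h := LinearMap.congr_fun (hS t).1 (μt 0 z)
    simp only [LinearMap.comp_apply] at h
    rw [h]
    exact he2 z
  -- the "antipode property" sums
  have hsum : ∀ (x : B) (rx : Coalgebra.Repr ℂ x (B × B)),
      ∑ i ∈ rx.index, μt t (S t (rx.left i) ⊗ₜ[ℂ] rx.right i)
        = counit (R := ℂ) x • (1 : B) := by
    intro x rx
    have h := LinearMap.congr_fun (hS t).1 x
    simp only [LinearMap.comp_apply] at h
    rw [← rx.eq] at h
    simp only [map_sum, TensorProduct.map_tmul, LinearMap.id_coe, id_eq] at h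
    rw [h, unitCounit]
    simp [Algebra.algebraMap_eq_smul_one]
  -- `(μ_t ∘ τ ∘ (S_t ⊗ S_t)) ⋆ μ_t = e`
  have hHF : Stmt12.cnv (μt t)
      (μt t ∘ₗ (TensorProduct.comm ℂ B B).toLinearMap ∘ₗ TensorProduct.map (S t) (S t))
      (μt t) = Stmt12.ecu := by
    apply TensorProduct.ext'
    intro x y
    rw [Stmt12.cnv_apply]
    have rx := ℛ ℂ x
    have ry := ℛ ℂ y
    have hcx : comul (R := ℂ) (x ⊗ₜ[ℂ] y)
        = (tensorTensorTensorComm ℂ B B B B) (comul (R := ℂ) x ⊗ₜ[ℂ] comul (R := ℂ) y) := rfl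
    rw [hcx, ← rx.eq, ← ry.eq]
    simp only [TensorProduct.sum_tmul, TensorProduct.tmul_sum, map_sum,
      tensorTensorTensorComm_tmul, TensorProduct.map_tmul, LinearMap.comp_apply,
      LinearEquiv.coe_coe, TensorProduct.comm_tmul]
    calc ∑ j ∈ ry.index, ∑ i ∈ rx.index,
          μt t (μt t (S t (ry.left j) ⊗ₜ[ℂ] S t (rx.left i)) ⊗ₜ[ℂ]
            μt t (rx.right i ⊗ₜ[ℂ] ry.right j))
        = ∑ j ∈ ry.index, ∑ i ∈ rx.index,
            μt t (S t (ry.left j) ⊗ₜ[ℂ]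
              μt t (μt t (S t (rx.left i) ⊗ₜ[ℂ] rx.right i) ⊗ₜ[ℂ] ry.right j)) := by
          refine Finset.sum_congr rfl fun j _ => Finset.sum_congr rfl fun i _ => ?_
          rw [hassoc t (S t (ry.left j)) (S t (rx.left i)) (μt t (rx.right i ⊗ₜ[ℂ] ry.right j)),
            ← hassoc t (S t (rx.left i)) (rx.right i) (ry.right j)]
      _ = ∑ j ∈ ry.index, counit (R := ℂ) x • μt t (S t (ry.left j) ⊗ₜ[ℂ] ry.right j) := by
          refine Finset.sum_congr rfl fun j _ => ?_
          calc ∑ i ∈ rx.index,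
                μt t (S t (ry.left j) ⊗ₜ[ℂ]
                  μt t (μt t (S t (rx.left i) ⊗ₜ[ℂ] rx.right i) ⊗ₜ[ℂ] ry.right j))
              = (μt t ∘ₗ TensorProduct.mk ℂ B B (S t (ry.left j)) ∘ₗ μt t ∘ₗ
                  (TensorProduct.mk ℂ B B).flip (ry.right j))
                  (∑ i ∈ rx.index, μt t (S t (rx.left i) ⊗ₜ[ℂ] rx.right i)) := by
                rw [map_sum]
                rfl
            _ = counit (R := ℂ) x • μt t (S t (ry.left j) ⊗ₜ[ℂ] ry.right j) := by
                rw [hsum x rx, map_smul]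
                simp only [LinearMap.comp_apply, LinearMap.flip_apply, TensorProduct.mk_apply]
                rw [(hone t (ry.right j)).1]
      _ = counit (R := ℂ) x • (counit (R := ℂ) y • (1 : B)) := by
          rw [← Finset.smul_sum, hsum y ry]
      _ = Stmt12.ecu (x ⊗ₜ[ℂ] y) := by
          rw [Stmt12.ecu_apply, smul_smul,
            show counit (R := ℂ) (x ⊗ₜ[ℂ] y) = counit (R := ℂ) x * counit (R := ℂ) y from by simp [mul_comm]]
  -- uniqueness of inverses: the "anti-homomorphism" identity for `S_t`
  have hH := Stmt12.cnv_assoc (μt t) (hassoc t)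
    (A := B ⊗[ℂ] B)
  have huniq : (μt t ∘ₗ (TensorProduct.comm ℂ B B).toLinearMap ∘ₗ TensorProduct.map (S t) (S t))
      = S t ∘ₗ μt (-t) := by
    calc (μt t ∘ₗ (TensorProduct.comm ℂ B B).toLinearMap ∘ₗ TensorProduct.map (S t) (S t))
        = Stmt12.cnv (μt t)
            (μt t ∘ₗ (TensorProduct.comm ℂ B B).toLinearMap ∘ₗ TensorProduct.map (S t) (S t))
            Stmt12.ecu :=
          (Stmt12.cnv_ecu_right (μt t) (fun a => (hone t a).2) _).symm
      _ = Stmt12.cnv (μt t)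
            (μt t ∘ₗ (TensorProduct.comm ℂ B B).toLinearMap ∘ₗ TensorProduct.map (S t) (S t))
            (Stmt12.cnv (μt t) (μt t) (S t ∘ₗ μt (-t))) := by rw [hFG]
      _ = Stmt12.cnv (μt t)
            (Stmt12.cnv (μt t)
              (μt t ∘ₗ (TensorProduct.comm ℂ B B).toLinearMap ∘ₗ TensorProduct.map (S t) (S t))
              (μt t)) (S t ∘ₗ μt (-t)) := (hH _ _ _).symm
      _ = Stmt12.cnv (μt t) Stmt12.ecu (S t ∘ₗ μt (-t)) := by rw [hHF]
      _ = S t ∘ₗ μt (-t) := Stmt12.cnv_ecu_left (μt t) (fun a => (hone t a).1) _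
  -- naturality of the flip
  have hswap : ((TensorProduct.comm ℂ B B).toLinearMap ∘ₗ
      TensorProduct.map (S t) (S t) ∘ₗ TensorProduct.map (S (-t)) LinearMap.id)
      = TensorProduct.map (S t) (S t ∘ₗ S (-t)) ∘ₗ (TensorProduct.comm ℂ B B).toLinearMap := by
    apply TensorProduct.ext'
    intro a b
    simp
  -- `S_t ⋆ (S_t ∘ S_{-t}) = e`
  have hi : Stmt12.cnv (μt t) (S t) (S t ∘ₗ S (-t)) = Stmt12.ecu := by
    ext b
    have h := LinearMap.congr_fun (congrArg (fun F : B ⊗[ℂ] B →ₗ[ℂ] B =>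
      F ∘ₗ (TensorProduct.map (S (-t)) LinearMap.id ∘ₗ comul (R := ℂ))) huniq) b
    simp only [LinearMap.comp_apply] at h
    have hb := LinearMap.congr_fun (hS (-t)).1 b
    simp only [LinearMap.comp_apply] at hb
    rw [hb] at h
    have hsw := LinearMap.congr_fun hswap (comul (R := ℂ) b)
    simp only [LinearMap.comp_apply] at hsw
    rw [hsw] at h
    have hcc := LinearMap.congr_fun hcocomm b
    simp only [LinearMap.comp_apply] at hcc
    rw [hcc] at h
    rw [Stmt12.cnv_apply, h, hSe t b]
    rfl
  -- conclusion
  have hA := Stmt12.cnv_assoc (μt t) (hassoc t) (A := B)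
  calc S t ∘ₗ S (-t)
      = Stmt12.cnv (μt t) Stmt12.ecu (S t ∘ₗ S (-t)) :=
        (Stmt12.cnv_ecu_left (μt t) (fun a => (hone t a).1) _).symm
    _ = Stmt12.cnv (μt t) (Stmt12.cnv (μt t) LinearMap.id (S t)) (S t ∘ₗ S (-t)) := by
        rw [show Stmt12.cnv (μt t) LinearMap.id (S t) = Stmt12.ecu from (hS t).2.trans hecuB]
    _ = Stmt12.cnv (μt t) LinearMap.id (Stmt12.cnv (μt t) (S t) (S t ∘ₗ S (-t))) :=
        hA LinearMap.id (S t) (S t ∘ₗ S (-t))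
    _ = Stmt12.cnv (μt t) LinearMap.id Stmt12.ecu := by rw [hi]
    _ = LinearMap.id := Stmt12.cnv_ecu_right (μt t) (fun a => (hone t a).2) _
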